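/- Let n : ℕ and let R ⊆ FreeGroup (Fin n) be a set of relators such that the presentation ⟨Fin n; R⟩ is recursively presented, i.e., REPred (fun l : List (Fin n × Bool) => FreeGroup.mk l ∈ R). Let k : ℕ and hs : Fin k → FreeGroup (Fin n) be a finite tuple generating a subgroup H of the presented group (the image of Subgroup.closure (Set.range hs)). Then the 'yes' part of the subgroup membership problem for H is recursively enumerable: REPred (fun l : List (Fin n × Bool) => ∃ h ∈ Subgroup.closure (Set.range hs), (FreeGroup.mk l)⁻¹ * h ∈ Subgroup.normalClosure R). -/

import Mathlib

open Nat.Partrec (Code)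
open Nat.Partrec.Code

namespace MPAux


/-- An RE predicate is represented by a monotone primrec Bool test. -/
lemma re_rep {α : Type*} [Primcodable α] {p : α → Prop} (hp : REPred p) :
    ∃ T : α → ℕ → Bool, Primrec₂ T ∧ (∀ a s t, s ≤ t → T a s = true → T a t = true) ∧
      ∀ a, p a ↔ ∃ t, T a t = true := by
  unfold REPred at hp
  obtain ⟨c, hc⟩ := exists_code.1 hp
  refine ⟨fun a t => (evaln t c (Encodable.encode a)).isSome, ?_, ?_, ?_⟩
  · have : Primrec fun q : α × ℕ => evaln q.2 c (Encodable.encode q.1) :=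
      primrec_evaln.comp (((Primrec.snd).pair (Primrec.const c)).pair
        (Primrec.encode.comp Primrec.fst))
    exact Primrec.option_isSome.comp this
  · intro a s t hst h
    rw [Option.isSome_iff_exists] at h ⊢
    obtain ⟨x, hx⟩ := h
    exact ⟨x, evaln_mono hst hx⟩
  · intro a
    have hdom : p a ↔ (eval c (Encodable.encode a)).Dom := by
      have := congrFun hc (Encodable.encode a)
      rw [this]
      simp [Part.bind, Encodable.encodek, Part.assert]
    rw [hdom]
    constructor
    · intro h
      obtain ⟨t, ht⟩ := evaln_complete.1 (Part.get_mem h)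
      exact ⟨t, Option.isSome_iff_exists.2 ⟨_, ht⟩⟩
    · rintro ⟨t, ht⟩
      obtain ⟨x, hx⟩ := Option.isSome_iff_exists.1 ht
      exact Part.dom_iff_mem.2 ⟨x, evaln_sound hx⟩

/-- Existential projection of a primrec Bool test is RE. -/
lemma exists_re {α β : Type*} [Primcodable α] [Primcodable β] {T : α → β → Bool}
    (hT : Primrec₂ T) : REPred fun a => ∃ b, T a b = true := by
  have hT' : Primrec₂ fun a (t : ℕ) =>
      (Option.casesOn (Encodable.decode (α := β) t) false (T a) : Bool) :=
    Primrec.option_casesOn (Primrec.decode.comp Primrec.snd) (Primrec.const false)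
      (hT.comp (Primrec.fst.comp Primrec.fst) Primrec.snd)
  have hpart : Partrec fun a => Nat.rfind fun t =>
      Part.some (Option.casesOn (Encodable.decode (α := β) t) false (T a) : Bool) :=
    Partrec.rfind (hT'.to_comp.partrec₂)
  refine hpart.dom_re.of_eq fun a => ?_
  refine Nat.rfind_dom.trans ?_
  constructor
  · rintro ⟨t, ht, -⟩
    simp only [Part.mem_some_iff] at ht
    cases hd : Encodable.decode (α := β) t with
    | none => rw [hd] at ht; exact absurd ht.symm (by simp)
    | some b => rw [hd] at ht; exact ⟨b, ht.symm⟩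
  · rintro ⟨b, hb⟩
    refine ⟨Encodable.encode b, ?_, fun {m} _ => trivial⟩
    simp [Encodable.encodek, hb]
lemma primrec_reduce {α : Type*} [Primcodable α] [DecidableEq α] :
    Primrec (FreeGroup.reduce (α := α)) := by
  have h : Primrec₂ fun (_ : List (α × Bool))
      (q : (α × Bool) × List (α × Bool) × List (α × Bool)) =>
      (List.casesOn q.2.2 [q.1] fun hd2 tl2 =>
        if q.1.1 = hd2.1 ∧ q.1.2 = !hd2.2 then tl2 else q.1 :: hd2 :: tl2 :
        List (α × Bool)) := by
    apply Primrec.list_casesOn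
      (f := fun q : List (α × Bool) × ((α × Bool) × List (α × Bool) × List (α × Bool)) =>
        q.2.2.2)
      (g := fun q => [q.2.1])
      (h := fun q p => if q.2.1.1 = p.1.1 ∧ q.2.1.2 = !p.1.2 then p.2 else q.2.1 :: p.1 :: p.2)
    · exact Primrec.snd.comp (Primrec.snd.comp Primrec.snd)
    · exact Primrec.list_cons.comp (Primrec.fst.comp Primrec.snd) (Primrec.const [])
    · apply Primrec.ite
      · apply PrimrecPred.and
        · exact Primrec.eq.comp
            (Primrec.fst.comp (Primrec.fst.comp (Primrec.snd.comp Primrec.fst)))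
            (Primrec.fst.comp (Primrec.fst.comp Primrec.snd))
        · exact Primrec.eq.comp
            (Primrec.snd.comp (Primrec.fst.comp (Primrec.snd.comp Primrec.fst)))
            ((Primrec.dom_finite not).comp
              (Primrec.snd.comp (Primrec.fst.comp Primrec.snd)))
      · exact Primrec.snd.comp Primrec.snd
      · exact Primrec.list_cons.comp
          (Primrec.fst.comp (Primrec.snd.comp Primrec.fst))
          (Primrec.list_cons.comp (Primrec.fst.comp Primrec.snd)
            (Primrec.snd.comp Primrec.snd))
  have := Primrec.list_rec Primrec.id (Primrec.const ([] : List (α × Bool))) h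
  exact this.of_eq fun l => rfl
variable {n k : ℕ}

def wordOf (hs : Fin k → FreeGroup (Fin n)) (j : List (Fin k × Bool)) : List (Fin n × Bool) :=
  j.flatMap fun p => cond p.2 (hs p.1).toWord (FreeGroup.invRev (hs p.1).toWord)

def conjWord (c : List (List (Fin n × Bool) × List (Fin n × Bool) × Bool)) :
    List (Fin n × Bool) :=
  c.flatMap fun q => (q.1 ++ cond q.2.2 q.2.1 (FreeGroup.invRev q.2.1)) ++ FreeGroup.invRev q.1

lemma mk_wordOf_mem (hs : Fin k → FreeGroup (Fin n)) (j : List (Fin k × Bool)) :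
    FreeGroup.mk (wordOf hs j) ∈ Subgroup.closure (Set.range hs) := by
  induction j with
  | nil => exact (FreeGroup.one_eq_mk ▸ Subgroup.one_mem _ : _)
  | cons p j ih =>
    have : wordOf hs (p :: j) =
        (cond p.2 (hs p.1).toWord (FreeGroup.invRev (hs p.1).toWord)) ++ wordOf hs j := rfl
    rw [this, ← FreeGroup.mul_mk]
    refine Subgroup.mul_mem _ ?_ ih
    cases hb : p.2 with
    | true =>
      simp only [cond]
      rw [FreeGroup.mk_toWord]
      exact Subgroup.subset_closure ⟨p.1, rfl⟩
    | false =>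
      simp only [cond]
      rw [← FreeGroup.inv_mk, FreeGroup.mk_toWord]
      exact Subgroup.inv_mem _ (Subgroup.subset_closure ⟨p.1, rfl⟩)

lemma wordOf_surj (hs : Fin k → FreeGroup (Fin n)) {h : FreeGroup (Fin n)}
    (hh : h ∈ Subgroup.closure (Set.range hs)) :
    ∃ j, FreeGroup.mk (wordOf hs j) = h := by
  have : h ∈ Submonoid.closure (Set.range hs ∪ (Set.range hs)⁻¹) := by
    rw [← Subgroup.closure_toSubmonoid]; exact hh
  obtain ⟨L, hL, rfl⟩ := Submonoid.exists_list_of_mem_closure this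
  clear this hh
  induction L with
  | nil => exact ⟨[], by simp [wordOf, ← FreeGroup.one_eq_mk]⟩
  | cons y L ih =>
    obtain ⟨j, hj⟩ := ih fun z hz => hL z (List.mem_cons_of_mem _ hz)
    rcases hL y (List.mem_cons_self) with hy | hy
    · obtain ⟨i, rfl⟩ := hy
      refine ⟨(i, true) :: j, ?_⟩
      have : wordOf hs ((i, true) :: j) = (hs i).toWord ++ wordOf hs j := rfl
      rw [this, ← FreeGroup.mul_mk, FreeGroup.mk_toWord, hj, List.prod_cons]
    · obtain ⟨i, hi⟩ := Set.mem_inv.1 hy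
      refine ⟨(i, false) :: j, ?_⟩
      have : wordOf hs ((i, false) :: j) =
          FreeGroup.invRev (hs i).toWord ++ wordOf hs j := rfl
      rw [this, ← FreeGroup.mul_mk, ← FreeGroup.inv_mk, FreeGroup.mk_toWord, hj,
        List.prod_cons, hi, inv_inv]

lemma conjWord_mem {R : Set (FreeGroup (Fin n))}
    {c : List (List (Fin n × Bool) × List (Fin n × Bool) × Bool)}
    (hc : ∀ q ∈ c, FreeGroup.mk q.2.1 ∈ R) :
    FreeGroup.mk (conjWord c) ∈ Subgroup.normalClosure R := by
  induction c with
  | nil => exact (FreeGroup.one_eq_mk ▸ Subgroup.one_mem _ : _)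
  | cons q c ih =>
    have : conjWord (q :: c) =
        ((q.1 ++ cond q.2.2 q.2.1 (FreeGroup.invRev q.2.1)) ++ FreeGroup.invRev q.1)
          ++ conjWord c := rfl
    rw [this, ← FreeGroup.mul_mk]
    refine Subgroup.mul_mem _ ?_ (ih fun z hz => hc z (List.mem_cons_of_mem _ hz))
    rw [← FreeGroup.mul_mk, ← FreeGroup.mul_mk, ← FreeGroup.inv_mk]
    have hnormal : (Subgroup.normalClosure R).Normal := Subgroup.normalClosure_normal
    have hr : FreeGroup.mk q.2.1 ∈ Subgroup.normalClosure R :=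
      Subgroup.subset_normalClosure (hc q (List.mem_cons_self))
    have hmid : FreeGroup.mk (cond q.2.2 q.2.1 (FreeGroup.invRev q.2.1)) ∈
        Subgroup.normalClosure R := by
      cases q.2.2 with
      | true => exact hr
      | false =>
        simp only [cond]
        rw [← FreeGroup.inv_mk]
        exact Subgroup.inv_mem _ hr
    exact hnormal.conj_mem _ hmid _

lemma conjWord_surj {R : Set (FreeGroup (Fin n))} {m : FreeGroup (Fin n)}
    (hm : m ∈ Subgroup.normalClosure R) :
    ∃ c, (∀ q ∈ c, FreeGroup.mk q.2.1 ∈ R) ∧ FreeGroup.mk (conjWord c) = m := by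
  have : m ∈ Submonoid.closure
      (Group.conjugatesOfSet R ∪ (Group.conjugatesOfSet R)⁻¹) := by
    rw [← Subgroup.closure_toSubmonoid]; exact hm
  obtain ⟨L, hL, rfl⟩ := Submonoid.exists_list_of_mem_closure this
  clear this hm
  induction L with
  | nil => exact ⟨[], by simp, by simp [conjWord, ← FreeGroup.one_eq_mk]⟩
  | cons y L ih =>
    obtain ⟨c, hc, hmk⟩ := ih fun z hz => hL z (List.mem_cons_of_mem _ hz)
    have piece : ∀ (g a : FreeGroup (Fin n)) (b : Bool),
        FreeGroup.mk (conjWord ((g.toWord, a.toWord, b) :: c)) =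
          g * (cond b a a⁻¹) * g⁻¹ * FreeGroup.mk (conjWord c) := by
      intro g a b
      have : conjWord ((g.toWord, a.toWord, b) :: c) =
          ((g.toWord ++ cond b a.toWord (FreeGroup.invRev a.toWord))
            ++ FreeGroup.invRev g.toWord) ++ conjWord c := by cases b <;> rfl
      rw [this, ← FreeGroup.mul_mk, ← FreeGroup.mul_mk, ← FreeGroup.mul_mk,
        ← FreeGroup.inv_mk, FreeGroup.mk_toWord]
      congr 2
      cases b with
      | true => simp [FreeGroup.mk_toWord]
      | false => simp [← FreeGroup.inv_mk, FreeGroup.mk_toWord]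
    rcases hL y (List.mem_cons_self) with hy | hy
    · obtain ⟨a, ha, hconj⟩ := Group.mem_conjugatesOfSet_iff.1 hy
      obtain ⟨g, hg⟩ := isConj_iff.1 hconj
      refine ⟨(g.toWord, a.toWord, true) :: c, ?_, ?_⟩
      · intro q hq
        rcases List.mem_cons.1 hq with rfl | hq
        · simpa [FreeGroup.mk_toWord] using ha
        · exact hc q hq
      · rw [piece, hmk, List.prod_cons]; simp [hg]
    · have hy' : y⁻¹ ∈ Group.conjugatesOfSet R := Set.mem_inv.1 hy
      obtain ⟨a, ha, hconj⟩ := Group.mem_conjugatesOfSet_iff.1 hy'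
      obtain ⟨g, hg⟩ := isConj_iff.1 hconj
      refine ⟨(g.toWord, a.toWord, false) :: c, ?_, ?_⟩
      · intro q hq
        rcases List.mem_cons.1 hq with rfl | hq
        · simpa [FreeGroup.mk_toWord] using ha
        · exact hc q hq
      · rw [piece, hmk, List.prod_cons]
        have : y = g * a⁻¹ * g⁻¹ := by
          have := congrArg (·⁻¹) hg
          simp at this
          rw [← this]; group
        simp [this]
lemma primrec_invRev {α : Type*} [Primcodable α] : Primrec (FreeGroup.invRev (α := α)) := by
  unfold FreeGroup.invRev
  exact Primrec.list_reverse.comp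
    (Primrec.list_map Primrec.id
      ((Primrec.fst.comp Primrec.snd).pair
        ((Primrec.dom_finite not).comp (Primrec.snd.comp Primrec.snd))))

lemma primrec_wordOf (hs : Fin k → FreeGroup (Fin n)) : Primrec (wordOf hs) := by
  unfold wordOf
  apply Primrec.list_flatMap Primrec.id
  exact Primrec.cond (Primrec.snd.comp Primrec.snd)
    ((Primrec.dom_finite fun i => (hs i).toWord).comp (Primrec.fst.comp Primrec.snd))
    (primrec_invRev.comp
      ((Primrec.dom_finite fun i => (hs i).toWord).comp (Primrec.fst.comp Primrec.snd)))

lemma primrec_conjWord : Primrec (conjWord (n := n)) := by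
  unfold conjWord
  apply Primrec.list_flatMap Primrec.id
  apply Primrec.list_append.comp
  · apply Primrec.list_append.comp (Primrec.fst.comp Primrec.snd)
    exact Primrec.cond (Primrec.snd.comp (Primrec.snd.comp Primrec.snd))
      (Primrec.fst.comp (Primrec.snd.comp Primrec.snd))
      (primrec_invRev.comp (Primrec.fst.comp (Primrec.snd.comp Primrec.snd)))
  · exact primrec_invRev.comp (Primrec.fst.comp Primrec.snd)

lemma primrec_and : Primrec₂ (· && · : Bool → Bool → Bool) :=
  Primrec₂.uncurry.mp <| Primrec.dom_finite _

lemma mk_eq_one_iff_reduce {α : Type*} [DecidableEq α] (w : List (α × Bool)) :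
    FreeGroup.mk w = 1 ↔ FreeGroup.reduce w = [] := by
  rw [← FreeGroup.toWord_eq_nil_iff, FreeGroup.toWord_mk]

lemma exists_uniform {β : Type*} (T : β → ℕ → Bool)
    (mono : ∀ b s t, s ≤ t → T b s = true → T b t = true) :
    ∀ c : List β, (∀ b ∈ c, ∃ t, T b t = true) → ∃ t, ∀ b ∈ c, T b t = true := by
  intro c
  induction c with
  | nil => exact fun _ => ⟨0, by simp⟩
  | cons b c ih =>
    intro h
    obtain ⟨t1, ht1⟩ := h b (List.mem_cons_self)
    obtain ⟨t2, ht2⟩ := ih fun z hz => h z (List.mem_cons_of_mem _ hz)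
    refine ⟨max t1 t2, ?_⟩
    intro z hz
    rcases List.mem_cons.1 hz with rfl | hz
    · exact mono _ _ _ (le_max_left _ _) ht1
    · exact mono _ _ _ (le_max_right _ _) (ht2 z hz)

lemma foldr_all_iff {β : Type*} (p : β → Bool) (c : List β) :
    c.foldr (fun q acc => p q && acc) true = true ↔ ∀ q ∈ c, p q = true := by
  induction c with
  | nil => simp
  | cons q c ih => simp [ih]

lemma main_iff {n k : ℕ} (hs : Fin k → FreeGroup (Fin n)) (R : Set (FreeGroup (Fin n)))
    (l : List (Fin n × Bool)) :
    (∃ h ∈ Subgroup.closure (Set.range hs),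
        (FreeGroup.mk l)⁻¹ * h ∈ Subgroup.normalClosure R) ↔
      ∃ w : List (Fin k × Bool) ×
          List (List (Fin n × Bool) × List (Fin n × Bool) × Bool),
        (∀ q ∈ w.2, FreeGroup.mk q.2.1 ∈ R) ∧
          FreeGroup.reduce (l ++ conjWord w.2 ++ FreeGroup.invRev (wordOf hs w.1)) = [] := by
  constructor
  · rintro ⟨h, hcl, hnc⟩
    obtain ⟨j, hj⟩ := wordOf_surj hs hcl
    obtain ⟨c, hc, hm⟩ := conjWord_surj hnc
    refine ⟨(j, c), hc, ?_⟩
    rw [← mk_eq_one_iff_reduce, ← FreeGroup.mul_mk, ← FreeGroup.mul_mk,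
      ← FreeGroup.inv_mk, hj, hm]
    group
  · rintro ⟨⟨j, c⟩, hc, hred⟩
    refine ⟨FreeGroup.mk (wordOf hs j), mk_wordOf_mem hs j, ?_⟩
    rw [← mk_eq_one_iff_reduce, ← FreeGroup.mul_mk, ← FreeGroup.mul_mk,
      ← FreeGroup.inv_mk] at hred
    have : FreeGroup.mk (conjWord c) =
        (FreeGroup.mk l)⁻¹ * FreeGroup.mk (wordOf hs j) := by
      have h2 : FreeGroup.mk l * FreeGroup.mk (conjWord c) =
          FreeGroup.mk (wordOf hs j) := mul_inv_eq_one.mp hred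
      exact eq_inv_mul_iff_mul_eq.mpr h2
    rw [← this]
    exact conjWord_mem hc

end MPAux

/-- The "yes" part of the subgroup membership problem for a finitely generated
subgroup of a recursively presented group `⟨Fin n; R⟩` is recursively enumerable. -/
theorem membership_problem_yes_part_re (n : ℕ) (R : Set (FreeGroup (Fin n)))
    (hR : REPred (fun l : List (Fin n × Bool) => FreeGroup.mk l ∈ R))
    (k : ℕ) (hs : Fin k → FreeGroup (Fin n)) :
    REPred (fun l : List (Fin n × Bool) =>
      ∃ h ∈ Subgroup.closure (Set.range hs),
        (FreeGroup.mk l)⁻¹ * h ∈ Subgroup.normalClosure R) := by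
  open MPAux in
  obtain ⟨T, hTprim, hTmono, hTiff⟩ := re_rep hR
  -- the computable Bool check
  set W := (List (Fin k × Bool) ×
    List (List (Fin n × Bool) × List (Fin n × Bool) × Bool)) × ℕ with hW
  have hcheck : Primrec₂ (fun (l : List (Fin n × Bool)) (w : W) =>
      (w.1.2.foldr (fun q acc => T q.2.1 w.2 && acc) true) &&
        decide (FreeGroup.reduce
          (l ++ conjWord w.1.2 ++ FreeGroup.invRev (wordOf hs w.1.1)) = [])) := by
    apply primrec_and.comp
    · apply Primrec.list_foldr
        (f := fun p : List (Fin n × Bool) × W => p.2.1.2)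
        (g := fun _ => true)
        (h := fun p q => T q.1.2.1 p.2.2 && q.2)
      · exact Primrec.snd.comp (Primrec.fst.comp Primrec.snd)
      · exact Primrec.const true
      · exact primrec_and.comp
          (hTprim.comp (Primrec.fst.comp (Primrec.snd.comp (Primrec.fst.comp Primrec.snd)))
            (Primrec.snd.comp (Primrec.snd.comp Primrec.fst)))
          (Primrec.snd.comp Primrec.snd)
    · apply PrimrecPred.decide
      apply Primrec.eq.comp _ (Primrec.const [])
      apply primrec_reduce.comp
      apply Primrec.list_append.comp
      · exact Primrec.list_append.comp Primrec.fst
          (primrec_conjWord.comp (Primrec.snd.comp (Primrec.fst.comp Primrec.snd)))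
      · exact primrec_invRev.comp
          ((primrec_wordOf hs).comp (Primrec.fst.comp (Primrec.fst.comp Primrec.snd)))
  refine (exists_re hcheck).of_eq fun l => ?_
  rw [main_iff hs R l]
  constructor
  · rintro ⟨⟨jc, t⟩, hw⟩
    rw [Bool.and_eq_true, foldr_all_iff] at hw
    exact ⟨jc, fun q hq => (hTiff q.2.1).2 ⟨t, hw.1 q hq⟩, of_decide_eq_true hw.2⟩
  · rintro ⟨jc, hrel, hred⟩
    obtain ⟨t, ht⟩ := exists_uniform (fun q => T q.2.1)
      (fun b s t hst h => hTmono b.2.1 s t hst h) jc.2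
      fun q hq => (hTiff q.2.1).1 (hrel q hq)
    refine ⟨(jc, t), ?_⟩
    rw [Bool.and_eq_true, foldr_all_iff]
    exact ⟨ht, decide_eq_true hred⟩
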